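/- Realizability by an HMC. Let n ≥ 1, let (r_k)_{k≥0} be a covariance series and let (H,F,N) be a minimal realization of (r_k)_{k≥1}, with r₀ = r_0. Then there exist a real n×n matrix a, a real 1×n matrix b, a positive definite n×n matrix η, a positive semidefinite n×n matrix α and a real number β ≥ 0 such that η = α + a η aᵀ, r₀ = β + b η bᵀ, and r_k = b a^{k−1} (a η bᵀ) for all k ≥ 1, if and only if there exists a positive definite n×n matrix P̃ such that N = F P̃ Hᵀ, P̃ − F P̃ Fᵀ is positive semidefinite, and r₀ − H P̃ Hᵀ ≥ 0. -/

import Mathlib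

open Matrix

/-- A real sequence is a covariance series iff all its Toeplitz matrices are
positive semidefinite. -/
def IsCovarianceSeries (r : ℕ → ℝ) : Prop :=
  ∀ m : ℕ,
    (Matrix.of fun i j : Fin (m + 1) => r ((i : ℤ) - (j : ℤ)).natAbs).PosSemidef

/-- Observability times controllability gives the Hankel matrix. -/
lemma obs_mul_ctr {n : ℕ} (X : Matrix (Fin 1) (Fin n) ℝ) (G : Matrix (Fin n) (Fin n) ℝ)
    (Y : Matrix (Fin n) (Fin 1) ℝ) :
    (Matrix.of fun i j : Fin n => (X * G ^ (i : ℕ)) 0 j) *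
      (Matrix.of fun i j : Fin n => (G ^ (j : ℕ) * Y) i 0)
      = Matrix.of (fun i j : Fin n => (X * G ^ ((i : ℕ) + (j : ℕ)) * Y) 0 0) := by
  ext i j
  rw [Matrix.mul_apply]
  simp only [Matrix.of_apply]
  have h : X * G ^ ((i : ℕ) + (j : ℕ)) * Y = (X * G ^ (i : ℕ)) * (G ^ (j : ℕ) * Y) := by
    rw [pow_add, ← Matrix.mul_assoc, Matrix.mul_assoc (X * G ^ (i : ℕ))]
  rw [h, Matrix.mul_apply]

/-- Observability matrix times the state matrix shifts. -/
lemma obs_mul_shift {n : ℕ} (X : Matrix (Fin 1) (Fin n) ℝ) (G : Matrix (Fin n) (Fin n) ℝ) :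
    (Matrix.of fun i j : Fin n => (X * G ^ (i : ℕ)) 0 j) * G
      = Matrix.of fun i j : Fin n => ((X * G) * G ^ (i : ℕ)) 0 j := by
  ext i j
  rw [Matrix.mul_apply]
  simp only [Matrix.of_apply]
  have h : (X * G) * G ^ (i : ℕ) = (X * G ^ (i : ℕ)) * G := by
    rw [Matrix.mul_assoc, Matrix.mul_assoc, ← pow_succ, ← pow_succ']
  rw [h, Matrix.mul_apply]

/-- Congruence by an invertible matrix preserves positive definiteness (real case). -/
lemma posDef_conj {n : ℕ} {η T : Matrix (Fin n) (Fin n) ℝ} (hη : η.PosDef)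
    (hT : IsUnit T.det) : (T * η * Tᵀ).PosDef := by
  have hpsd := hη.posSemidef.mul_mul_conjTranspose_same T
  rw [Matrix.conjTranspose_eq_transpose_of_trivial] at hpsd
  refine Matrix.PosDef.of_dotProduct_mulVec_pos hpsd.isHermitian fun x hx => ?_
  have hTt : IsUnit Tᵀ := (Matrix.isUnit_iff_isUnit_det _).mpr (by rwa [Matrix.det_transpose])
  have hinj : Function.Injective (Tᵀ.mulVec) := Matrix.mulVec_injective_iff_isUnit.mpr hTt
  have hx' : Tᵀ *ᵥ x ≠ 0 := by
    intro h
    exact hx (hinj (by simpa using h))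
  have := hη.dotProduct_mulVec_pos hx'
  have hcalc : star x ⬝ᵥ (T * η * Tᵀ) *ᵥ x = star (Tᵀ *ᵥ x) ⬝ᵥ η *ᵥ (Tᵀ *ᵥ x) := by
    simp only [star_trivial, ← Matrix.mulVec_mulVec]
    rw [Matrix.dotProduct_mulVec x T, ← Matrix.mulVec_transpose]
  rw [hcalc]
  exact this

/-- **realizability by an HMC.** A covariance series with minimal
realization `(H, F, N)` and `r₀ = r 0` can be produced by a stationary linear
Gaussian HMC of dimension `n` iff there is a positive definite `P̃` with
`N = F P̃ Hᵀ`, `P̃ - F P̃ Fᵀ ⪰ 0` and `r₀ - H P̃ Hᵀ ≥ 0`. -/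
theorem stmt_9 {n : ℕ} (hn : 1 ≤ n) (r : ℕ → ℝ)
    (hcov : IsCovarianceSeries r)
    (H : Matrix (Fin 1) (Fin n) ℝ) (F : Matrix (Fin n) (Fin n) ℝ)
    (N : Matrix (Fin n) (Fin 1) ℝ) (r0 : ℝ)
    (hr0 : r0 = r 0)
    (hrk : ∀ k : ℕ, 1 ≤ k → r k = (H * F ^ (k - 1) * N) 0 0)
    (hobs : IsUnit (Matrix.of fun i j : Fin n => (H * F ^ (i : ℕ)) 0 j))
    (hctr : IsUnit (Matrix.of fun i j : Fin n => (F ^ (j : ℕ) * N) i 0)) :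
    (∃ (a : Matrix (Fin n) (Fin n) ℝ) (b : Matrix (Fin 1) (Fin n) ℝ)
        (η α : Matrix (Fin n) (Fin n) ℝ) (β : ℝ),
        η.PosDef ∧ α.PosSemidef ∧ 0 ≤ β ∧
        η = α + a * η * aᵀ ∧
        r0 = β + (b * η * bᵀ) 0 0 ∧
        ∀ k : ℕ, 1 ≤ k → r k = (b * a ^ (k - 1) * (a * η * bᵀ)) 0 0) ↔
      ∃ P : Matrix (Fin n) (Fin n) ℝ, P.PosDef ∧
        N = F * P * Hᵀ ∧
        (P - F * P * Fᵀ).PosSemidef ∧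
        0 ≤ r0 - (H * P * Hᵀ) 0 0 := by
  constructor
  · rintro ⟨a, b, η, α, β, hη, hα, hβ, hstat, hr0', hMr⟩
    set M : Matrix (Fin n) (Fin 1) ℝ := a * η * bᵀ with hMdef
    set O : Matrix (Fin n) (Fin n) ℝ :=
      Matrix.of fun i j : Fin n => (H * F ^ (i : ℕ)) 0 j with hOdef
    set C : Matrix (Fin n) (Fin n) ℝ :=
      Matrix.of fun i j : Fin n => (F ^ (j : ℕ) * N) i 0 with hCdef
    set O' : Matrix (Fin n) (Fin n) ℝ :=
      Matrix.of fun i j : Fin n => (b * a ^ (i : ℕ)) 0 j with hO'def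
    set C' : Matrix (Fin n) (Fin n) ℝ :=
      Matrix.of fun i j : Fin n => (a ^ (j : ℕ) * M) i 0 with hC'def
    have detO : IsUnit O.det := (Matrix.isUnit_iff_isUnit_det O).mp hobs
    have detC : IsUnit C.det := (Matrix.isUnit_iff_isUnit_det C).mp hctr
    -- Hankel identities
    have hOC : O * C = O' * C' := by
      rw [hOdef, hCdef, hO'def, hC'def, obs_mul_ctr, obs_mul_ctr]
      ext i j
      simp only [Matrix.of_apply]
      have h1 := hrk ((i : ℕ) + (j : ℕ) + 1) (by omega)
      have h2 := hMr ((i : ℕ) + (j : ℕ) + 1) (by omega)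
      rw [Nat.add_sub_cancel] at h1 h2
      exact h1.symm.trans h2
    have hOFC : O * F * C = O' * a * C' := by
      rw [hOdef, hCdef, hO'def, hC'def, obs_mul_shift, obs_mul_shift, obs_mul_ctr, obs_mul_ctr]
      ext i j
      simp only [Matrix.of_apply]
      have h1 := hrk ((i : ℕ) + (j : ℕ) + 2) (by omega)
      have h2 := hMr ((i : ℕ) + (j : ℕ) + 2) (by omega)
      have e1 : (i : ℕ) + (j : ℕ) + 2 - 1 = (i : ℕ) + (j : ℕ) + 1 := by omega
      rw [e1] at h1 h2
      have e2 : H * F ^ ((i : ℕ) + (j : ℕ) + 1) * N = H * F * F ^ ((i : ℕ) + (j : ℕ)) * N := by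
        rw [Matrix.mul_assoc H F, ← pow_succ']
      have e3 : b * a ^ ((i : ℕ) + (j : ℕ) + 1) * M = b * a * a ^ ((i : ℕ) + (j : ℕ)) * M := by
        rw [Matrix.mul_assoc b a, ← pow_succ']
      rw [e2] at h1
      rw [e3] at h2
      exact h1.symm.trans h2
    have detO' : IsUnit O'.det := by
      have h : IsUnit (O'.det * C'.det) := by
        rw [← Matrix.det_mul, ← hOC, Matrix.det_mul]; exact detO.mul detC
      exact isUnit_of_mul_isUnit_left h
    have detC' : IsUnit C'.det := by
      have h : IsUnit (O'.det * C'.det) := by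
        rw [← Matrix.det_mul, ← hOC, Matrix.det_mul]; exact detO.mul detC
      exact isUnit_of_mul_isUnit_right h
    set T : Matrix (Fin n) (Fin n) ℝ := O⁻¹ * O' with hTdef
    have hOT : O * T = O' := by
      rw [hTdef, ← Matrix.mul_assoc, Matrix.mul_nonsing_inv O detO, Matrix.one_mul]
    have detT : IsUnit T.det := by
      have h : IsUnit (O.det * T.det) := by rw [← Matrix.det_mul, hOT]; exact detO'
      exact isUnit_of_mul_isUnit_right h
    have cancelO : ∀ {A B : Matrix (Fin n) (Fin n) ℝ}, O * A = O * B → A = B := by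
      intro A B h
      have h2 := congrArg (fun Z => O⁻¹ * Z) h
      simpa only [← Matrix.mul_assoc, Matrix.nonsing_inv_mul O detO, Matrix.one_mul] using h2
    have cancelC' : ∀ {A B : Matrix (Fin n) (Fin n) ℝ}, A * C' = B * C' → A = B := by
      intro A B h
      have h2 := congrArg (fun Z => Z * C'⁻¹) h
      simpa only [Matrix.mul_assoc, Matrix.mul_nonsing_inv C' detC', Matrix.mul_one] using h2
    have hTC' : T * C' = C := by
      apply cancelO
      rw [← Matrix.mul_assoc, hOT, ← hOC]
    have hFT : F * T = T * a := by
      apply cancelC'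
      apply cancelO
      calc O * (F * T * C') = O * F * (T * C') := by simp only [Matrix.mul_assoc]
        _ = O * F * C := by rw [hTC']
        _ = O' * a * C' := hOFC
        _ = O * T * a * C' := by rw [hOT]
        _ = O * (T * a * C') := by simp only [Matrix.mul_assoc]
    have z0 : Fin n := ⟨0, hn⟩
    have hb : b = H * T := by
      ext i j
      have hi : i = 0 := Subsingleton.elim i 0
      subst hi
      have h := congrFun (congrFun hOT ⟨0, hn⟩) j
      have hz : ((⟨0, hn⟩ : Fin n) : ℕ) = 0 := rfl
      rw [Matrix.mul_apply] at h
      simp only [hOdef, hO'def, Matrix.of_apply, hz, pow_zero, Matrix.mul_one] at h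
      rw [Matrix.mul_apply]
      exact h.symm
    have hTM : T * M = N := by
      ext i j
      have hj : j = 0 := Subsingleton.elim j 0
      subst hj
      have h := congrFun (congrFun hTC' i) ⟨0, hn⟩
      have hz : ((⟨0, hn⟩ : Fin n) : ℕ) = 0 := rfl
      rw [Matrix.mul_apply] at h
      simp only [hCdef, hC'def, Matrix.of_apply, hz, pow_zero, Matrix.one_mul] at h
      rw [Matrix.mul_apply]
      exact h
    have hbT : bᵀ = Tᵀ * Hᵀ := by rw [hb, Matrix.transpose_mul]
    refine ⟨T * η * Tᵀ, posDef_conj hη detT, ?_, ?_, ?_⟩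
    · -- N = F * P * Hᵀ
      have key : F * (T * η * Tᵀ) * Hᵀ = N := by
        calc F * (T * η * Tᵀ) * Hᵀ = (F * T) * η * (Tᵀ * Hᵀ) := by
              simp only [Matrix.mul_assoc]
          _ = (T * a) * η * bᵀ := by rw [hFT, ← hbT]
          _ = T * (a * η * bᵀ) := by simp only [Matrix.mul_assoc]
          _ = N := hTM
      exact key.symm
    · -- P - F P Fᵀ ⪰ 0
      have hstat' : η - a * η * aᵀ = α := by
        nth_rewrite 1 [hstat]; exact add_sub_cancel_right _ _
      have h1 : F * (T * η * Tᵀ) * Fᵀ = T * (a * η * aᵀ) * Tᵀ := by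
        calc F * (T * η * Tᵀ) * Fᵀ = (F * T) * η * (Tᵀ * Fᵀ) := by
              simp only [Matrix.mul_assoc]
          _ = (T * a) * η * (aᵀ * Tᵀ) := by
              rw [← Matrix.transpose_mul F T, hFT, Matrix.transpose_mul T a]
          _ = T * (a * η * aᵀ) * Tᵀ := by simp only [Matrix.mul_assoc]
      have h2 : T * η * Tᵀ - F * (T * η * Tᵀ) * Fᵀ = T * α * Tᵀ := by
        rw [h1, ← hstat', Matrix.mul_sub, Matrix.sub_mul]
      rw [h2]
      have := hα.mul_mul_conjTranspose_same T
      rwa [Matrix.conjTranspose_eq_transpose_of_trivial] at this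
    · -- r0 - H P Hᵀ ≥ 0
      have h1 : H * (T * η * Tᵀ) * Hᵀ = b * η * bᵀ := by
        calc H * (T * η * Tᵀ) * Hᵀ = (H * T) * η * (Tᵀ * Hᵀ) := by
              simp only [Matrix.mul_assoc]
          _ = b * η * bᵀ := by rw [← hb, ← hbT]
      rw [h1, hr0']
      simpa using hβ
  · rintro ⟨P, hP, hN, hsub, hr⟩
    refine ⟨F, H, P, P - F * P * Fᵀ, r0 - (H * P * Hᵀ) 0 0, hP, hsub, hr, by abel, by ring,
      fun k hk => ?_⟩
    rw [hrk k hk, hN, Matrix.mul_assoc]
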